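/- If A is an n×n totally nonnegative and nonsingular matrix, then for every x ∈ ℝⁿ, s⁺(Ax) ≤ s⁺(x). -/

import Mathlib

open scoped Classical

def TotallyNonneg {n : ℕ} (A : Matrix (Fin n) (Fin n) ℝ) : Prop :=
  ∀ (k : ℕ) (r c : Fin k → Fin n), StrictMono r → StrictMono c →
    0 ≤ (A.submatrix r c).det

def TotallyPos {n : ℕ} (A : Matrix (Fin n) (Fin n) ℝ) : Prop :=
  ∀ (k : ℕ) (r c : Fin k → Fin n), StrictMono r → StrictMono c →
    0 < (A.submatrix r c).det

noncomputable def countSignChanges : List ℝ → ℕ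
  | a :: b :: t => (if a * b < 0 then 1 else 0) + countSignChanges (b :: t)
  | _ => 0

noncomputable def sMinus {n : ℕ} (y : Fin n → ℝ) : ℕ :=
  countSignChanges ((List.ofFn y).filter (fun x => decide (x ≠ 0)))

noncomputable def sPlus {n : ℕ} (y : Fin n → ℝ) : ℕ :=
  sSup {k | ∃ z : Fin n → ℝ,
    (∀ i, (y i ≠ 0 → z i = y i) ∧ (y i = 0 → z i = 1 ∨ z i = -1)) ∧
    countSignChanges (List.ofFn z) = k}

def MatIrreducible {n : ℕ} (A : Matrix (Fin n) (Fin n) ℝ) : Prop :=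
  ∀ S : Set (Fin n), S.Nonempty → S ≠ Set.univ →
    ∃ i ∈ S, ∃ j ∉ S, A i j ≠ 0


lemma csc_cons_cons (a b : ℝ) (t : List ℝ) :
    countSignChanges (a :: b :: t) = (if a * b < 0 then 1 else 0) + countSignChanges (b :: t) := by
  rw [countSignChanges]

lemma csc_le_length : ∀ l : List ℝ, countSignChanges l ≤ l.length := by
  intro l
  induction l with
  | nil => simp [countSignChanges]
  | cons a t IH =>
    cases t with
    | nil => simp [countSignChanges]
    | cons b t' =>
      rw [csc_cons_cons]
      have : countSignChanges (b :: t') ≤ (b :: t').length := IH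
      simp only [List.length_cons] at *
      split <;> omega

lemma sign_transfer {X c p q : ℝ} (h1 : 0 < X * p * c) (h2 : 0 < q * p) : 0 < X * q * c := by
  have hp : p ≠ 0 := by rintro rfl; simp at h2
  have h3 : 0 < (X * q * c) * p ^ 2 := by nlinarith [mul_pos h1 h2]
  rcases mul_pos_iff.mp h3 with ⟨h, _⟩ | ⟨_, h⟩
  · exact h
  · exact absurd h (not_lt.mpr (sq_nonneg p))

lemma self_mul_self_pos {a : ℝ} (ha : a ≠ 0) : 0 < a * a := by
  rcases lt_or_gt_of_ne ha with h | h <;> nlinarith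

lemma sign_flip {A B Y c : ℝ} (h1 : 0 < A * Y * c) (h2 : A * B < 0) : 0 < B * Y * -c := by
  have hA : A ≠ 0 := by rintro rfl; simp at h2
  have h3 : 0 < (B * Y * -c) * A ^ 2 := by nlinarith [mul_pos h1 (neg_pos.mpr h2)]
  rcases mul_pos_iff.mp h3 with ⟨h, _⟩ | ⟨_, h⟩
  · exact h
  · exact absurd h (not_lt.mpr (sq_nonneg A))

def TNr {q p : ℕ} (E : Matrix (Fin q) (Fin p) ℝ) : Prop :=
  ∀ (k : ℕ) (r : Fin k → Fin q) (c : Fin k → Fin p), StrictMono r → StrictMono c →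
    0 ≤ (E.submatrix r c).det

def AltOn {q : ℕ} (k : ℕ) (v : Fin q → ℝ) : Prop :=
  ∃ j : Fin (k+1) → Fin q, StrictMono j ∧ ∀ t : Fin k, v (j t.castSucc) * v (j t.succ) < 0

def SignBlocks {p : ℕ} (m : ℕ) (w : Fin p → ℝ) : Prop :=
  ∃ ε : ℝ, (ε = 1 ∨ ε = -1) ∧ ∃ b : Fin p → Fin m, Monotone b ∧
    ∀ i, w i = 0 ∨ 0 < w i * ε * (-1:ℝ) ^ (b i : ℕ)

lemma tnr_entry_nonneg {q p : ℕ} {E : Matrix (Fin q) (Fin p) ℝ} (hE : TNr E)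
    (i : Fin q) (jc : Fin p) : 0 ≤ E i jc := by
  have := hE 1 (fun _ => i) (fun _ => jc) (Subsingleton.strictMono _) (Subsingleton.strictMono _)
  simpa [Matrix.det_fin_one] using this

theorem VD : ∀ m : ℕ, ∀ {q p : ℕ} (E : Matrix (Fin q) (Fin p) ℝ), TNr E →
    ∀ w : Fin p → ℝ, SignBlocks (m+1) w → ¬ AltOn (m+1) (E.mulVec w) := by
  intro m
  induction m with
  | zero =>
    intro q p E hE w hSB hAlt
    obtain ⟨ε, hε, b, -, hsb⟩ := hSB
    obtain ⟨j, -, halt⟩ := hAlt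
    have hεsq : ε * ε = 1 := by rcases hε with rfl | rfl <;> norm_num
    have key : ∀ r : Fin q, 0 ≤ ε * (E.mulVec w) r := by
      intro r
      rw [Matrix.mulVec, dotProduct, Finset.mul_sum]
      refine Finset.sum_nonneg fun i _ => ?_
      rcases hsb i with h0 | hpos
      · simp [h0]
      · have hb : ((b i : ℕ)) = 0 := by omega
        rw [hb, pow_zero, mul_one] at hpos
        have : 0 ≤ E r i * (w i * ε) := mul_nonneg (tnr_entry_nonneg hE r i) (by linarith [hpos])
        calc (0:ℝ) ≤ E r i * (w i * ε) := this
          _ = ε * (E r i * w i) := by ring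
    have h0 := key (j (0 : Fin 1).castSucc)
    have h1 := key (j (0 : Fin 1).succ)
    have := halt 0
    nlinarith
  | succ m IH =>
    intro q p E hE w hSB hAlt
    obtain ⟨ε, hε, b, hbmono, hsb⟩ := hSB
    obtain ⟨j, hjmono, halt⟩ := hAlt
    set y := E.mulVec w with hy
    set Y : Fin (m+3) → ℝ := fun t => y (j t) with hY
    have halt' : ∀ t : Fin (m+2), Y t.castSucc * Y t.succ < 0 := halt
    -- sign structure of Y
    have hY0 : Y 0 ≠ 0 := by
      intro h
      have := halt' 0
      rw [Fin.castSucc_zero, h] at this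
      simp at this
    have hsigns : ∀ t : Fin (m+3), 0 < Y t * Y 0 * (-1:ℝ) ^ (t : ℕ) := by
      intro t
      induction t using Fin.induction with
      | zero => simpa using self_mul_self_pos hY0
      | succ t' IH' =>
        have h2 := halt' t'
        have h3 := sign_flip IH' h2
        have : ((t'.succ : Fin (m+3)) : ℕ) = (t'.castSucc : ℕ) + 1 := by simp
        rw [this, pow_succ]
        calc (0:ℝ) < Y t'.succ * Y 0 * -((-1:ℝ)^((t'.castSucc : ℕ))) := h3
          _ = Y t'.succ * Y 0 * ((-1:ℝ)^((t'.castSucc : ℕ)) * -1) := by ring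
    have hYnz : ∀ t, Y t ≠ 0 := by
      intro t h
      have := hsigns t
      rw [h] at this
      simp at this
    -- the compressed matrix
    set W : Fin (m+2) → ℝ := fun s => ε * (-1:ℝ) ^ (s : ℕ) with hWdef
    set D : Matrix (Fin (m+3)) (Fin (m+2)) ℝ :=
      fun t s => ∑ i, (if b i = s then |w i| else 0) * E (j t) i with hD
    have hWpm : ∀ s : Fin (m+2), W s = 1 ∨ W s = -1 := by
      intro s
      have hpow : (-1:ℝ)^(s:ℕ) = 1 ∨ (-1:ℝ)^(s:ℕ) = -1 := by
        rcases Nat.even_or_odd (s:ℕ) with he | he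
        · exact Or.inl he.neg_one_pow
        · exact Or.inr he.neg_one_pow
      have hWs : W s = ε * (-1:ℝ)^(s:ℕ) := rfl
      rcases hε with rfl | rfl <;> rcases hpow with h | h <;> rw [hWs, h] <;> norm_num
    have habsW : ∀ i, |w i| * W (b i) = w i := by
      intro i
      rcases hsb i with h0 | hpos
      · simp [h0]
      · have hpos' : 0 < w i * W (b i) := by
          have hWs : W (b i) = ε * (-1:ℝ)^((b i):ℕ) := rfl
          rw [hWs, ← mul_assoc]
          exact hpos
        rcases hWpm (b i) with h | h
        · rw [h, mul_one] at hpos' ⊢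
          exact abs_of_pos hpos'
        · rw [h] at hpos' ⊢
          have hneg : w i < 0 := by nlinarith
          rw [abs_of_neg hneg]
          ring
    have hDw : D.mulVec W = Y := by
      funext t
      rw [Matrix.mulVec, dotProduct]
      have step1 : ∀ s, D t s * W s
          = ∑ i, (if b i = s then |w i| * E (j t) i * W s else 0) := by
        intro s
        show (∑ i, (if b i = s then |w i| else 0) * E (j t) i) * W s = _
        rw [Finset.sum_mul]
        refine Finset.sum_congr rfl fun i _ => ?_
        split_ifs <;> simp [mul_assoc]
      rw [Finset.sum_congr rfl (fun s _ => step1 s), Finset.sum_comm]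
      have step2 : ∀ i, (∑ s, if b i = s then |w i| * E (j t) i * W s else 0)
          = E (j t) i * w i := by
        intro i
        rw [Finset.sum_ite_eq]
        simp only [Finset.mem_univ, if_true]
        rw [mul_comm (|w i|) (E (j t) i), mul_assoc, habsW i]
      rw [Finset.sum_congr rfl (fun i _ => step2 i)]
      show _ = (E.mulVec w) (j t)
      rw [Matrix.mulVec, dotProduct]
    have hDTN : TNr D := by
      intro k r c hr hc
      rw [← Matrix.det_transpose, Matrix.transpose_submatrix]
      have hrows : D.transpose.submatrix c r
          = fun e => ∑ i ∈ Finset.univ, (if b i = c e then |w i| else 0) • (fun a => E (j (r a)) i) := by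
        funext e a
        rw [Finset.sum_apply]
        simp only [Pi.smul_apply, smul_eq_mul]
        rfl
      have hdetf : (D.transpose.submatrix c r).det
          = Matrix.detRowAlternating (D.transpose.submatrix c r) := rfl
      rw [hdetf, hrows]
      have expand := (Matrix.detRowAlternating (n := Fin k) (R := ℝ)).toMultilinearMap.map_sum_finset
        (fun e i => (if b i = c e then |w i| else 0) • (fun a => E (j (r a)) i))
        (fun _ => (Finset.univ : Finset (Fin p)))
      rw [show ⇑(Matrix.detRowAlternating (n := Fin k) (R := ℝ)).toMultilinearMap
        = ⇑(Matrix.detRowAlternating (n := Fin k) (R := ℝ)) from rfl] at expand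
      rw [expand]
      refine Finset.sum_nonneg fun σ hσ => ?_
      have hterm := (Matrix.detRowAlternating (n := Fin k) (R := ℝ)).toMultilinearMap.map_smul_univ
        (fun e => if b (σ e) = c e then |w (σ e)| else 0)
        (fun e => (fun a => E (j (r a)) (σ e)))
      rw [show ⇑(Matrix.detRowAlternating (n := Fin k) (R := ℝ)).toMultilinearMap
        = ⇑(Matrix.detRowAlternating (n := Fin k) (R := ℝ)) from rfl] at hterm
      rw [hterm]
      by_cases hbc : ∀ e, b (σ e) = c e
      · have hσmono : StrictMono σ := by
          intro e1 e2 h12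
          by_contra hle
          push_neg at hle
          have : b (σ e2) ≤ b (σ e1) := hbmono hle
          rw [hbc e1, hbc e2] at this
          exact absurd (hc h12) (not_lt.mpr this)
        have hmat : (fun e => (fun a => E (j (r a)) (σ e)))
            = (E.submatrix (fun a => j (r a)) σ).transpose := rfl
        have hdet2 : Matrix.detRowAlternating (n := Fin k) (R := ℝ)
            ((E.submatrix (fun a => j (r a)) σ).transpose)
            = ((E.submatrix (fun a => j (r a)) σ).transpose).det := rfl
        rw [hmat, hdet2, Matrix.det_transpose]
        have hdet3 : 0 ≤ (E.submatrix (fun a => j (r a)) σ).det :=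
          hE k (fun a => j (r a)) σ (hjmono.comp hr) hσmono
        have hprod : 0 ≤ ∏ e, (if b (σ e) = c e then |w (σ e)| else 0) :=
          Finset.prod_nonneg fun e _ => by split_ifs <;> simp [abs_nonneg]
        rw [smul_eq_mul]
        exact mul_nonneg hprod hdet3
      · push_neg at hbc
        obtain ⟨e0, he0⟩ := hbc
        have : (∏ e, (if b (σ e) = c e then |w (σ e)| else 0)) = 0 :=
          Finset.prod_eq_zero (Finset.mem_univ e0) (by rw [if_neg he0])
        rw [this, zero_smul]
    set M : Fin (m+3) → ℝ := fun t => (D.submatrix t.succAbove id).det with hM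
    have hM0 : ∀ t, 0 ≤ M t := fun t =>
      hDTN (m+2) t.succAbove id (Fin.strictMono_succAbove t) strictMono_id
    set S : Matrix (Fin (m+3)) (Fin (m+3)) ℝ := fun t s => Fin.snoc (α := fun _ => ℝ) (D t) (Y t) s with hS
    have hSsub : ∀ t : Fin (m+3),
        S.submatrix t.succAbove (Fin.last (m+2)).succAbove = D.submatrix t.succAbove id := by
      intro t
      rw [Fin.succAbove_last]
      funext a b'
      show S (t.succAbove a) b'.castSucc = D (t.succAbove a) b'
      rw [hS]
      exact Fin.snoc_castSucc _ _ _
    have hMzero : ∀ t, M t = 0 := by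
      have hvec : S.mulVec (Fin.snoc W (-1)) = 0 := by
        funext t
        rw [Matrix.mulVec, dotProduct, Fin.sum_univ_castSucc]
        simp only [hS, Fin.snoc_castSucc, Fin.snoc_last]
        have hDwt := congrFun hDw t
        rw [Matrix.mulVec, dotProduct] at hDwt
        show (∑ s : Fin (m+2), D t s * W s) + Y t * (-1) = 0
        rw [hDwt]
        ring
      have hne : (Fin.snoc W (-1) : Fin (m+3) → ℝ) ≠ 0 := by
        intro h
        have := congrFun h (Fin.last (m+2))
        rw [Fin.snoc_last] at this
        norm_num at this
      have hdetS : S.det = 0 := Matrix.exists_mulVec_eq_zero_iff.mp ⟨_, hne, hvec⟩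
      have hexp := Matrix.det_succ_column S (Fin.last (m+2))
      rw [hdetS] at hexp
      have hexp' : (0:ℝ) = ∑ t : Fin (m+3), (-1:ℝ)^((t:ℕ) + (m+2)) * Y t * M t := by
        rw [hexp]
        refine Finset.sum_congr rfl fun t _ => ?_
        have h1 : S t (Fin.last (m+2)) = Y t := Fin.snoc_last _ _
        rw [h1, hSsub t, Fin.val_last]
      have key : ∑ t : Fin (m+3), ((-1:ℝ)^(t:ℕ) * Y t * Y 0) * M t = 0 := by
        have e0 : ∀ t : Fin (m+3), (-1:ℝ)^((t:ℕ)+(m+2)) * Y t * M t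
            = ((-1:ℝ)^(m+2)) * ((-1:ℝ)^(t:ℕ) * Y t * M t) := by
          intro t; rw [pow_add]; ring
        rw [Finset.sum_congr rfl (fun t _ => e0 t), ← Finset.mul_sum] at hexp'
        have hpow : ((-1:ℝ)^(m+2)) ≠ 0 := pow_ne_zero _ (by norm_num)
        have hsum0 : ∑ t : Fin (m+3), (-1:ℝ)^(t:ℕ) * Y t * M t = 0 := by
          rcases mul_eq_zero.mp hexp'.symm with h | h
          · exact absurd h hpow
          · exact h
        have : ∑ t : Fin (m+3), ((-1:ℝ)^(t:ℕ) * Y t * Y 0) * M t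
            = (∑ t : Fin (m+3), (-1:ℝ)^(t:ℕ) * Y t * M t) * Y 0 := by
          rw [Finset.sum_mul]
          exact Finset.sum_congr rfl fun t _ => by ring
        rw [this, hsum0, zero_mul]
      have hcoef : ∀ t : Fin (m+3), 0 < (-1:ℝ)^(t:ℕ) * Y t * Y 0 := by
        intro t
        have := hsigns t
        nlinarith [hsigns t]
      intro t
      have hterm := (Finset.sum_eq_zero_iff_of_nonneg
        (fun t _ => mul_nonneg (le_of_lt (hcoef t)) (hM0 t))).mp key t (Finset.mem_univ t)
      rcases mul_eq_zero.mp hterm with h | h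
      · exact absurd h (ne_of_gt (hcoef t))
      · exact h
    have hker : ∃ c : Fin (m+2) → ℝ, c ≠ 0 ∧ D.mulVec c = 0 := by
      by_contra hno
      push_neg at hno
      have hrange : ∃ t0 : Fin (m+3),
          (fun s => if t0 = s then (1:ℝ) else 0) ∉ LinearMap.range (Matrix.mulVecLin D) := by
        by_contra h2
        push_neg at h2
        have hsurj : LinearMap.range (Matrix.mulVecLin D) = ⊤ := by
          rw [eq_top_iff]
          rintro v -
          have hv := pi_eq_sum_univ v
          rw [hv]
          exact Submodule.sum_mem _ (fun t _ => Submodule.smul_mem _ _ (h2 t))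
        have h3 := LinearMap.finrank_range_le (Matrix.mulVecLin D)
        rw [hsurj, finrank_top, Module.finrank_pi, Module.finrank_pi] at h3
        simp only [Fintype.card_fin] at h3
        omega
      obtain ⟨t0, ht0⟩ := hrange
      set S' : Matrix (Fin (m+3)) (Fin (m+3)) ℝ :=
        fun t s => Fin.snoc (α := fun _ => ℝ) (D t) (if t0 = t then (1:ℝ) else 0) s with hS'
      have hS'sub : ∀ t : Fin (m+3),
          S'.submatrix t.succAbove (Fin.last (m+2)).succAbove = D.submatrix t.succAbove id := by
        intro t
        rw [Fin.succAbove_last]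
        funext a b'
        show S' (t.succAbove a) b'.castSucc = D (t.succAbove a) b'
        rw [hS']
        exact Fin.snoc_castSucc _ _ _
      have hdet1 : S'.det = 0 := by
        rw [Matrix.det_succ_column S' (Fin.last (m+2))]
        apply Finset.sum_eq_zero
        intro t _
        have h1 : S' t (Fin.last (m+2)) = (if t0 = t then (1:ℝ) else 0) := Fin.snoc_last _ _
        rw [h1, hS'sub t]
        by_cases h : t0 = t
        · rw [if_pos h, show (D.submatrix t.succAbove id).det = M t from rfl, hMzero t]
          ring
        · rw [if_neg h]
          ring
      have hdet2 : S'.det ≠ 0 := by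
        intro hd0
        obtain ⟨v, hvne, hv0⟩ := Matrix.exists_mulVec_eq_zero_iff.mpr hd0
        set cp : Fin (m+2) → ℝ := fun s => v s.castSucc with hcp
        set av : ℝ := v (Fin.last (m+2)) with hav
        have hcomp : ∀ t, (D.mulVec cp) t + (if t0 = t then (1:ℝ) else 0) * av = 0 := by
          intro t
          have hvt := congrFun hv0 t
          rw [Matrix.mulVec, dotProduct, Fin.sum_univ_castSucc] at hvt
          simp only [hS', Fin.snoc_castSucc, Fin.snoc_last] at hvt
          rw [Matrix.mulVec, dotProduct]
          exact hvt
        by_cases ha : av = 0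
        · have hDcp : D.mulVec cp = 0 := by
            funext t
            have := hcomp t
            rw [ha, mul_zero, add_zero] at this
            exact this
          have hcz : cp = 0 := by
            by_contra hcne
            exact hno cp hcne hDcp
          apply hvne
          funext s
          induction s using Fin.lastCases with
          | last => exact hav ▸ ha
          | cast i =>
            have := congrFun hcz i
            exact this
        · apply ht0
          refine ⟨(-av⁻¹) • cp, ?_⟩
          rw [Matrix.mulVecLin_apply, Matrix.mulVec_smul]
          funext t
          have hct := hcomp t
          have hDt : (D.mulVec cp) t = -((if t0 = t then (1:ℝ) else 0) * av) := by linarith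
          show (-av⁻¹) • (D.mulVec cp) t = _
          rw [hDt, smul_eq_mul]
          show -av⁻¹ * -((if t0 = t then (1:ℝ) else 0) * av) = (if t0 = t then (1:ℝ) else 0)
          split_ifs with h
          · field_simp
          · ring
      exact hdet2 hdet1
    obtain ⟨c, hc0, hDc⟩ := hker
    obtain ⟨sm, -, hsmax⟩ := Finset.exists_max_image Finset.univ (fun s => |c s|)
      Finset.univ_nonempty
    have hcsm : c sm ≠ 0 := by
      obtain ⟨s₀, hs₀⟩ := Function.ne_iff.mp hc0
      intro h
      have h1 := hsmax s₀ (Finset.mem_univ _)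
      rw [h] at h1
      simp at h1
      exact hs₀ (by simpa using h1)
    set tt : ℝ := W sm / c sm with htt
    set w'' : Fin (m+2) → ℝ := fun s => W s - tt * c s with hw''
    have hWabs : ∀ s, |W s| = 1 := by
      intro s
      rw [hWdef]
      rcases hε with rfl | rfl <;> simp [abs_mul, abs_pow]
    have hts : ∀ s, |tt * c s| ≤ 1 := by
      intro s
      rw [abs_mul, htt, abs_div, hWabs]
      rw [div_mul_eq_mul_div, div_le_one (abs_pos.mpr hcsm)]
      simpa using hsmax s (Finset.mem_univ _)
    have hwsm : w'' sm = 0 := by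
      simp only [hw'', htt]
      field_simp
      ring
    have hw''sign : ∀ s, w'' s = 0 ∨ 0 < w'' s * W s := by
      intro s
      by_cases h : w'' s = 0
      · exact Or.inl h
      refine Or.inr ?_
      have h1 : w'' s * W s = W s * W s - (tt * c s) * W s := by rw [hw'']; ring
      have h2 : W s * W s = 1 := by
        have := hWabs s
        nlinarith [abs_nonneg (W s), sq_abs (W s)]
      have h3 : (tt * c s) * W s ≤ 1 := by
        calc (tt * c s) * W s ≤ |(tt * c s) * W s| := le_abs_self _
          _ = |tt * c s| * |W s| := abs_mul _ _
          _ ≤ 1 := by rw [hWabs]; simpa using hts s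
      have h4 : 0 ≤ w'' s * W s := by rw [h1, h2]; linarith
      have h5 : w'' s * W s ≠ 0 :=
        mul_ne_zero h (by intro hW0; have := hWabs s; rw [hW0] at this; simp at this)
      exact lt_of_le_of_ne h4 (Ne.symm h5)
    have hDw'' : D.mulVec w'' = Y := by
      have : w'' = W - tt • c := by funext s; simp [hw'', smul_eq_mul]
      rw [this, Matrix.mulVec_sub, Matrix.mulVec_smul, hDc, hDw]
      simp
    have hSB' : SignBlocks (m+1) w'' := by
      rcases Nat.eq_zero_or_pos (sm : ℕ) with hsmz | hsmp
      · -- the vanished block is the first one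
        refine ⟨-ε, ?_, fun s => ⟨(s:ℕ) - 1, by have := s.isLt; omega⟩, ?_, ?_⟩
        · rcases hε with rfl | rfl
          · exact Or.inr (by norm_num)
          · exact Or.inl (by norm_num)
        · intro s1 s2 h12
          simp only [Fin.mk_le_mk]
          exact Nat.sub_le_sub_right (Fin.le_def.mp h12) 1
        · intro s
          by_cases hs0 : (s:ℕ) = 0
          · left
            have hseq : s = sm := Fin.ext (by omega)
            rw [hseq]
            exact hwsm
          · rcases hw''sign s with h0 | hp
            · exact Or.inl h0
            · right
              have hsge : 1 ≤ (s:ℕ) := by omega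
              have hW' : W s = ε * (-1:ℝ)^(s:ℕ) := rfl
              have hpow : (-1:ℝ)^(s:ℕ) = (-1:ℝ)^((s:ℕ)-1) * (-1) := by
                conv_lhs => rw [show (s:ℕ) = ((s:ℕ)-1)+1 by omega]
                rw [pow_succ]
              have heq : w'' s * (-ε) * (-1:ℝ)^((s:ℕ)-1) = w'' s * W s := by
                rw [hW', hpow]; ring
              show 0 < w'' s * (-ε) * (-1:ℝ)^((s:ℕ)-1)
              rw [heq]
              exact hp
      · -- the vanished block is interior / at the end
        refine ⟨ε, hε, fun s =>
          ⟨if (s:ℕ) < (sm:ℕ) then (s:ℕ) else if (s:ℕ) = (sm:ℕ) then (sm:ℕ)-1 else (s:ℕ)-2,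
           by have h1 := s.isLt; have h2 := sm.isLt; split_ifs <;> omega⟩, ?_, ?_⟩
        · intro s1 s2 h12
          have h12' : (s1:ℕ) ≤ (s2:ℕ) := Fin.le_def.mp h12
          simp only [Fin.mk_le_mk]
          have h1 := s1.isLt
          have h2 := s2.isLt
          split_ifs <;> omega
        · intro s
          rcases hw''sign s with h0 | hp
          · exact Or.inl h0
          · right
            have hsne : (s:ℕ) ≠ (sm:ℕ) := by
              intro h
              have hseq : s = sm := Fin.ext h
              rw [hseq, hwsm] at hp
              simp at hp
            have hW' : W s = ε * (-1:ℝ)^(s:ℕ) := rfl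
            by_cases hlt : (s:ℕ) < (sm:ℕ)
            · show 0 < w'' s * ε *
                (-1:ℝ)^((⟨if (s:ℕ) < (sm:ℕ) then (s:ℕ) else if (s:ℕ) = (sm:ℕ) then (sm:ℕ)-1 else (s:ℕ)-2, _⟩ : Fin (m+1)) : ℕ)
              simp only [Fin.val_mk, if_pos hlt]
              have heq : w'' s * ε * (-1:ℝ)^(s:ℕ) = w'' s * W s := by rw [hW']; ring
              rw [heq]
              exact hp
            · have hgt : (sm:ℕ) < (s:ℕ) := by omega
              have hs2 : 2 ≤ (s:ℕ) := by omega
              show 0 < w'' s * ε *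
                (-1:ℝ)^((⟨if (s:ℕ) < (sm:ℕ) then (s:ℕ) else if (s:ℕ) = (sm:ℕ) then (sm:ℕ)-1 else (s:ℕ)-2, _⟩ : Fin (m+1)) : ℕ)
              simp only [Fin.val_mk, if_neg hlt, if_neg hsne]
              have hpow : (-1:ℝ)^((s:ℕ)-2) = (-1:ℝ)^(s:ℕ) := by
                conv_rhs => rw [show (s:ℕ) = ((s:ℕ)-2)+2 by omega]
                rw [pow_add]
                norm_num
              rw [hpow]
              have heq : w'' s * ε * (-1:ℝ)^(s:ℕ) = w'' s * W s := by rw [hW']; ring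
              rw [heq]
              exact hp
    have hIH := IH D hDTN w'' hSB'
    rw [hDw''] at hIH
    refine hIH ⟨Fin.castSucc, fun a1 a2 hlt => Fin.castSucc_lt_castSucc_iff.mpr hlt, ?_⟩
    intro t
    have := halt' t.castSucc
    rwa [Fin.succ_castSucc] at this


lemma master : ∀ (l : List ℝ), (∀ a ∈ l, a ≠ 0) →
    ∃ b j : ℕ → ℕ,
      (∀ i, b i ≤ b (i+1)) ∧
      (∀ i, i < l.length → b i ≤ countSignChanges l) ∧
      (∀ (i : ℕ) (h : i < l.length) (h0 : 0 < l.length),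
        0 < l.get ⟨i, h⟩ * l.get ⟨0, h0⟩ * (-1 : ℝ) ^ (b i)) ∧
      (∀ s, s ≤ countSignChanges l → (0 < l.length → j s < l.length) ∧ b (j s) = s) ∧
      (∀ s, j s < j (s+1)) := by
  intro l
  induction l with
  | nil =>
    intro _
    refine ⟨fun _ => 0, fun s => s, by simp, by simp, by simp, ?_, by simp⟩
    intro s hs
    simp [countSignChanges] at hs
    simp [hs]
  | cons a t IH =>
    intro hl
    have ha : a ≠ 0 := hl a (by simp)
    cases t with
    | nil =>
      refine ⟨fun _ => 0, fun s => s, by simp, by simp, ?_, ?_, by simp⟩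
      · intro i h h0
        simp only [List.length_cons, List.length_nil] at h
        have hi : i = 0 := by omega
        subst hi
        simpa using self_mul_self_pos ha
      · intro s hs
        simp [countSignChanges] at hs
        simp [hs]
    | cons bb t' =>
      have hbb : bb ≠ 0 := hl bb (by simp)
      obtain ⟨b', j', hbmono, hble, hsign, hjprop, hjmono⟩ := IH (fun x hx => hl x (by simp [hx]))
      have hget : ∀ (i : ℕ) (h : i < (bb :: t').length),
          (a :: bb :: t').get ⟨i+1, by simp only [List.length_cons] at h ⊢; omega⟩
            = (bb :: t').get ⟨i, h⟩ := fun i h => rfl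
      have hget0 : ∀ (h : 0 < (a :: bb :: t').length), (a :: bb :: t').get ⟨0, h⟩ = a :=
        fun _ => rfl
      have hget0' : ∀ (h : 0 < (bb :: t').length), (bb :: t').get ⟨0, h⟩ = bb := fun _ => rfl
      by_cases hab : a * bb < 0
      · -- sign change at the front
        have hsc : countSignChanges (a :: bb :: t') = 1 + countSignChanges (bb :: t') := by
          rw [csc_cons_cons, if_pos hab]
        refine ⟨fun i => if i = 0 then 0 else b' (i-1) + 1,
                fun s => if s = 0 then 0 else j' (s-1) + 1, ?_, ?_, ?_, ?_, ?_⟩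
        · intro i; cases i with
          | zero => simp
          | succ i => simpa using hbmono i
        · intro i hi
          cases i with
          | zero => simp
          | succ i =>
            simp only [List.length_cons] at hi
            have := hble i (by simp only [List.length_cons]; omega)
            simp only [Nat.succ_ne_zero, if_false, Nat.succ_sub_one, hsc]
            omega
        · intro i h h0
          cases i with
          | zero =>
            have := self_mul_self_pos ha
            simpa [hget0] using this
          | succ i =>
            simp only [List.length_cons] at h
            have hh : i < (bb :: t').length := by simp only [List.length_cons]; omega
            have hsign' := hsign i hh (by simp)
            rw [hget0'] at hsign'
            simp only [Nat.succ_ne_zero, if_false, Nat.succ_sub_one]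
            rw [hget i hh, hget0, pow_succ]
            have h2 : 0 < (-a) * bb := by nlinarith
            have h3 := sign_transfer hsign' h2
            calc (0:ℝ) < ((bb :: t').get ⟨i, hh⟩ * -a * (-1)^ (b' i)) := h3
            _ = (bb :: t').get ⟨i, hh⟩ * a * ((-1)^(b' i) * -1) := by ring
        · intro s hs
          rw [hsc] at hs
          cases s with
          | zero => simp
          | succ s =>
            have hs' : s ≤ countSignChanges (bb :: t') := by omega
            obtain ⟨hj1, hj2⟩ := hjprop s hs'
            have hj1' := hj1 (by simp)
            simp only [Nat.succ_ne_zero, if_false, Nat.succ_sub_one]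
            refine ⟨?_, by simp [hj2]⟩
            intro _
            simp only [List.length_cons] at hj1' ⊢
            omega
        · intro s
          cases s with
          | zero => simp
          | succ s =>
            simp only [Nat.succ_ne_zero, if_false, Nat.succ_sub_one]
            exact Nat.succ_lt_succ (hjmono s)
      · -- no sign change at the front
        have hab' : 0 < a * bb := by
          rcases lt_trichotomy (a*bb) 0 with h' | h' | h'
          · exact absurd h' hab
          · exact absurd (mul_eq_zero.mp h') (by push_neg; exact ⟨ha, hbb⟩)
          · exact h'
        have hsc : countSignChanges (a :: bb :: t') = countSignChanges (bb :: t') := by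
          rw [csc_cons_cons, if_neg hab, zero_add]
        refine ⟨fun i => if i = 0 then 0 else b' (i-1),
                fun s => j' s + 1, ?_, ?_, ?_, ?_, ?_⟩
        · intro i; cases i with
          | zero => simp
          | succ i => simpa using hbmono i
        · intro i hi
          cases i with
          | zero => simp
          | succ i =>
            simp only [List.length_cons] at hi
            have := hble i (by simp only [List.length_cons]; omega)
            simp only [Nat.succ_ne_zero, if_false, Nat.succ_sub_one, hsc]
            omega
        · intro i h h0
          cases i with
          | zero =>
            have := self_mul_self_pos ha
            simpa [hget0] using this
          | succ i =>
            simp only [List.length_cons] at h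
            have hh : i < (bb :: t').length := by simp only [List.length_cons]; omega
            have hsign' := hsign i hh (by simp)
            rw [hget0'] at hsign'
            simp only [Nat.succ_ne_zero, if_false, Nat.succ_sub_one]
            rw [hget i hh, hget0]
            exact sign_transfer hsign' hab'
        · intro s hs
          rw [hsc] at hs
          obtain ⟨hj1, hj2⟩ := hjprop s hs
          have hj1' := hj1 (by simp)
          refine ⟨?_, by simp [hj2]⟩
          intro _
          simp only [List.length_cons] at hj1' ⊢
          omega
        · intro s
          exact Nat.succ_lt_succ (hjmono s)


lemma alt_from_signs {a b' z0 : ℝ} {s : ℕ} (h1 : 0 < a * z0 * (-1:ℝ)^s)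
    (h2 : 0 < b' * z0 * (-1:ℝ)^(s+1)) : a * b' < 0 := by
  have h3 := mul_pos h1 h2
  have h4 : (a * z0 * (-1:ℝ)^s) * (b' * z0 * (-1:ℝ)^(s+1))
      = -(a*b') * (z0^2 * ((-1:ℝ)^s)^2) := by rw [pow_succ]; ring
  rw [h4] at h3
  have h5 : ((-1:ℝ)^s)^2 = 1 := by rw [← pow_mul, mul_comm, pow_mul]; norm_num
  rw [h5, mul_one] at h3
  nlinarith [sq_nonneg z0]

lemma prod_neg_transfer {ya yb za zb : ℝ} (h1 : 0 < ya * za) (h2 : 0 < yb * zb)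
    (h3 : za * zb < 0) : ya * yb < 0 := by
  nlinarith [mul_pos h1 h2]

lemma sign_combine {xd zp z0 e c : ℝ} (h1 : 0 < xd * zp) (h2 : 0 < zp * z0 * c)
    (h3 : 0 < e * z0) : 0 < xd * e * c := by
  have h4 := mul_pos (mul_pos h1 h2) h3
  have h5 : (xd * zp) * (zp * z0 * c) * (e * z0) = (xd * e * c) * (zp^2 * z0^2) := by ring
  rw [h5] at h4
  rcases mul_pos_iff.mp h4 with ⟨h, _⟩ | ⟨_, h⟩
  · exact h
  · exact absurd h (not_lt.mpr (by positivity))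

theorem tn_nonsingular_sPlus_svdp {n : ℕ} (A : Matrix (Fin n) (Fin n) ℝ)
    (hA : TotallyNonneg A) (hdet : IsUnit A.det) :
    ∀ x : Fin n → ℝ, sPlus (A.mulVec x) ≤ sPlus x := by
  intro x
  by_cases hx : x = 0
  · rw [hx, Matrix.mulVec_zero]
  -- setup
  obtain ⟨i₀, hi₀0⟩ := Function.ne_iff.mp hx
  have hi₀ : x i₀ ≠ 0 := by simpa using hi₀0
  have hn : 0 < n := by
    rcases Nat.eq_zero_or_pos n with h | h
    · exact absurd (Fin.elim0 (h ▸ i₀)) id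
    · exact h
  set y := A.mulVec x with hy
  have hTNrA : TNr A := hA
  have hbdd : BddAbove {k | ∃ z : Fin n → ℝ,
      (∀ i, (x i ≠ 0 → z i = x i) ∧ (x i = 0 → z i = 1 ∨ z i = -1)) ∧
      countSignChanges (List.ofFn z) = k} := by
    refine ⟨n, ?_⟩
    rintro k' ⟨z'', -, hzz⟩
    rw [← hzz]
    calc countSignChanges (List.ofFn z'') ≤ (List.ofFn z'').length := csc_le_length _
      _ = n := List.length_ofFn
  show sSup _ ≤ sPlus x
  apply csSup_le
  · refine ⟨countSignChanges (List.ofFn (fun i => if y i = 0 then 1 else y i)),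
      fun i => if y i = 0 then 1 else y i, fun i => ⟨fun h => if_neg h, fun h => Or.inl (if_pos h)⟩, rfl⟩
  rintro k ⟨z, hz, hk⟩
  rcases Nat.eq_zero_or_pos k with hk0 | hk1
  · rw [hk0]; exact Nat.zero_le _
  have hznz : ∀ i, z i ≠ 0 := by
    intro i
    by_cases h : y i = 0
    · rcases (hz i).2 h with h' | h' <;> rw [h'] <;> norm_num
    · rw [(hz i).1 h]; exact h
  -- perturbation
  set u : Fin n → ℝ := (A⁻¹).mulVec (fun i => if y i = 0 then z i else 0) with hu
  set F : Finset (Fin n) := Finset.univ.filter (fun i => x i ≠ 0) with hF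
  have hFne : F.Nonempty := ⟨i₀, by simp [hF, hi₀]⟩
  set δ : ℝ := F.inf' hFne (fun i => |x i| / (2 * (|u i| + 1))) with hδ
  have hδpos : 0 < δ := by
    rw [hδ, Finset.lt_inf'_iff]
    intro i hi
    have hxi : x i ≠ 0 := by simpa [hF] using hi
    have : 0 < |x i| := abs_pos.mpr hxi
    positivity
  set xδ : Fin n → ℝ := fun i => x i + δ * u i with hxδ
  have hAu : A.mulVec u = (fun i => if y i = 0 then z i else 0) := by
    rw [hu, Matrix.mulVec_mulVec, Matrix.mul_nonsing_inv _ hdet, Matrix.one_mulVec]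
  have hyδ : A.mulVec xδ = fun i => if y i = 0 then δ * z i else y i := by
    have hxδ2 : xδ = x + δ • u := by funext i; simp [hxδ, smul_eq_mul]
    rw [hxδ2, Matrix.mulVec_add, Matrix.mulVec_smul, hAu, ← hy]
    funext i
    by_cases h : y i = 0
    · simp [h, Pi.add_apply, smul_eq_mul]
    · simp [h, Pi.add_apply, smul_eq_mul]
  have hconf : ∀ i, 0 < (A.mulVec xδ) i * z i := by
    intro i
    rw [hyδ]
    by_cases h : y i = 0
    · simp only [if_pos h]
      have := self_mul_self_pos (hznz i)
      calc (0:ℝ) < δ * (z i * z i) := by positivity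
        _ = δ * z i * z i := by ring
    · simp only [if_neg h]
      rw [(hz i).1 h]
      exact self_mul_self_pos h
  -- alternation of A.mulVec xδ with k sign changes
  have hAlt : AltOn k (A.mulVec xδ) := by
    obtain ⟨bl, jl, hblmono, hble, hsignl, hjl, hjlmono⟩ := master (List.ofFn z)
      (by intro a ha
          obtain ⟨i, hi⟩ := List.mem_ofFn.mp ha
          rw [← hi]; exact hznz i)
    have hlen : (List.ofFn z).length = n := List.length_ofFn
    have hjlt : ∀ s : Fin (k+1), jl (s:ℕ) < n := by
      intro s
      have hs : (s:ℕ) ≤ countSignChanges (List.ofFn z) := by rw [hk]; omega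
      have := (hjl (s:ℕ) hs).1 (by rw [hlen]; exact hn)
      rwa [hlen] at this
    set jj : Fin (k+1) → Fin n := fun s => ⟨jl (s:ℕ), hjlt s⟩ with hjj
    have hjlsm : StrictMono jl := strictMono_nat_of_lt_succ hjlmono
    have hzsign : ∀ s : Fin (k+1), 0 < z (jj s) * z ⟨0, hn⟩ * (-1:ℝ)^(s:ℕ) := by
      intro s
      have hs : (s:ℕ) ≤ countSignChanges (List.ofFn z) := by rw [hk]; omega
      have hb := (hjl (s:ℕ) hs).2
      have hlt : jl (s:ℕ) < (List.ofFn z).length := by rw [hlen]; exact hjlt s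
      have h0lt : 0 < (List.ofFn z).length := by rw [hlen]; exact hn
      have := hsignl (jl (s:ℕ)) hlt h0lt
      rw [List.get_ofFn, List.get_ofFn, hb] at this
      convert this using 3 <;> simp [Fin.cast, hjj]
    refine ⟨jj, ?_, ?_⟩
    · intro s1 s2 h12
      exact hjlsm (by exact h12)
    · intro t
      have h1 := hzsign t.castSucc
      have h2 := hzsign t.succ
      rw [Fin.coe_castSucc] at h1
      rw [Fin.val_succ] at h2
      have hzz := alt_from_signs h1 h2
      exact prod_neg_transfer (hconf (jj t.castSucc)) (hconf (jj t.succ)) hzz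
  -- sign conformity of xδ with x at nonzeros
  have hxconf : ∀ i, x i ≠ 0 → 0 < xδ i * x i := by
    intro i hxi
    have hiF : i ∈ F := by simp [hF, hxi]
    have hle : δ ≤ |x i| / (2 * (|u i| + 1)) := Finset.inf'_le _ hiF
    have habs : |δ * u i| < |x i| := by
      rw [abs_mul, abs_of_pos hδpos]
      have h1 : δ * |u i| ≤ (|x i| / (2 * (|u i| + 1))) * |u i| :=
        mul_le_mul_of_nonneg_right hle (abs_nonneg _)
      have h2 : (|x i| / (2 * (|u i| + 1))) * |u i| < |x i| := by
        rw [div_mul_eq_mul_div, mul_comm, ← div_mul_eq_mul_div]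
        have h3 : |u i| / (2 * (|u i| + 1)) < 1 := by
          rw [div_lt_one (by positivity)]
          nlinarith [abs_nonneg (u i)]
        nlinarith [abs_pos.mpr hxi, abs_nonneg (u i)]
      linarith
    have h2 : -(|δ * u i| * |x i|) ≤ δ * u i * x i := by
      rw [← abs_mul]; exact neg_abs_le _
    have h3 : xδ i * x i = x i * x i + δ * u i * x i := by rw [hxδ]; ring
    have h4 : |δ * u i| * |x i| < x i * x i := by
      have := mul_lt_mul_of_pos_right habs (abs_pos.mpr hxi)
      rwa [abs_mul_abs_self] at this
    linarith
  -- the assignment z' for x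
  set z' : Fin n → ℝ := fun i => if x i = 0 then (if 0 < xδ i then (1:ℝ) else -1) else x i
    with hz'def
  have hz'cond : ∀ i, (x i ≠ 0 → z' i = x i) ∧ (x i = 0 → z' i = 1 ∨ z' i = -1) := by
    intro i
    constructor
    · intro h; simp [hz'def, h]
    · intro h
      simp only [hz'def, if_pos h]
      split_ifs <;> [exact Or.inl rfl; exact Or.inr rfl]
  have hz'nz : ∀ i, z' i ≠ 0 := by
    intro i
    by_cases h : x i = 0
    · rcases (hz'cond i).2 h with h' | h' <;> rw [h'] <;> norm_num
    · rw [(hz'cond i).1 h]; exact h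
  have hz'conf : ∀ i, xδ i = 0 ∨ 0 < xδ i * z' i := by
    intro i
    by_cases h : x i = 0
    · by_cases h2 : xδ i = 0
      · exact Or.inl h2
      · right
        simp only [hz'def, if_pos h]
        rcases lt_trichotomy (xδ i) 0 with h3 | h3 | h3
        · rw [if_neg (by linarith)]
          nlinarith
        · exact absurd h3 h2
        · rw [if_pos h3]
          nlinarith
    · right
      rw [(hz'cond i).1 h]
      exact hxconf i h
  -- main bound
  have hmain : k ≤ countSignChanges (List.ofFn z') := by
    by_contra hlt
    push_neg at hlt
    obtain ⟨bl', jl', hblmono', hble', hsignl', -, -⟩ := master (List.ofFn z')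
      (by intro a ha
          obtain ⟨i, hi⟩ := List.mem_ofFn.mp ha
          rw [← hi]; exact hz'nz i)
    have hlen' : (List.ofFn z').length = n := List.length_ofFn
    have hblmono'' : Monotone bl' := monotone_nat_of_le_succ hblmono'
    have hblk : ∀ i : Fin n, bl' (i:ℕ) < k := by
      intro i
      have := hble' (i:ℕ) (by rw [hlen']; exact i.isLt)
      omega
    set ee : ℝ := if 0 < z' ⟨0, hn⟩ then (1:ℝ) else -1 with hee
    have heez0 : 0 < ee * z' ⟨0, hn⟩ := by
      rw [hee]
      rcases lt_trichotomy (z' ⟨0, hn⟩) 0 with h3 | h3 | h3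
      · rw [if_neg (by linarith)]; nlinarith
      · exact absurd h3 (hz'nz _)
      · rw [if_pos h3]; nlinarith
    have hSBk : SignBlocks k xδ := by
      refine ⟨ee, ?_, fun i => ⟨bl' (i:ℕ), hblk i⟩, ?_, ?_⟩
      · rw [hee]; split_ifs <;> [exact Or.inl rfl; exact Or.inr rfl]
      · intro i1 i2 h12
        simp only [Fin.mk_le_mk]
        exact hblmono'' (Fin.le_def.mp h12)
      · intro i
        rcases hz'conf i with h0 | hp
        · exact Or.inl h0
        · right
          have hlt2 : (i:ℕ) < (List.ofFn z').length := by rw [hlen']; exact i.isLt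
          have h0lt : 0 < (List.ofFn z').length := by rw [hlen']; exact hn
          have hsg := hsignl' (i:ℕ) hlt2 h0lt
          rw [List.get_ofFn, List.get_ofFn] at hsg
          have hsg' : 0 < z' i * z' ⟨0, hn⟩ * (-1:ℝ)^(bl' (i:ℕ)) := by
            convert hsg using 3 <;> simp [Fin.cast]
          exact sign_combine hp hsg' heez0
    have hkk : k - 1 + 1 = k := by omega
    have hVD := VD (k-1) A hTNrA xδ (by rwa [hkk])
    rw [hkk] at hVD
    exact hVD hAlt
  calc k ≤ countSignChanges (List.ofFn z') := hmain
    _ ≤ sPlus x := le_csSup hbdd ⟨z', hz'cond, rfl⟩
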